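/- Let ζ > 0, λ > 0 and ρ, u ∈ ℝ. Set χ := ρζu − λ, χ⁺ := ρζu + λ, Δ := χ² − ζ²(u² − u), and R(η) := (u² − u)/2 + χη + (ζ²/2)η². If 0 < √Δ < −χ⁺ (in particular Δ > 0 and χ⁺ < 0), then R(η) > 0 for all η ∈ [0, 2λ/ζ²] and ∫₀^{2λ/ζ²} dη/R(η) = (1/√Δ)·log |(χ⁺χ + 2λ√Δ − Δ)/(χ⁺χ − 2λ√Δ − Δ)|. -/

import Mathlib

open Set MeasureTheory intervalIntegral Real

/-- moment explosion time in the stationary variance regime for the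
Heston model, case `0 < √Δ < −χ⁺`: with `χ = ρζu − λ`, `χ⁺ = ρζu + λ` and
`Δ = χ² − ζ²(u²−u)`, if `0 < √Δ < −χ⁺` then `R > 0` on `[0, 2λ/ζ²]` and
`∫₀^{2λ/ζ²} dη/R(η) = (1/√Δ)·log|(χ⁺χ + 2λ√Δ − Δ)/(χ⁺χ − 2λ√Δ − Δ)|`. -/
theorem heston_stationary_explosion_time_log (ζ lam ρ u χ χp Δ : ℝ)
    (hζ : 0 < ζ) (hlam : 0 < lam)
    (hχ : χ = ρ * ζ * u - lam) (hχp : χp = ρ * ζ * u + lam)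
    (hΔ : Δ = χ ^ 2 - ζ ^ 2 * (u ^ 2 - u))
    (R : ℝ → ℝ) (hR : ∀ η, R η = (u ^ 2 - u) / 2 + χ * η + ζ ^ 2 / 2 * η ^ 2)
    (hΔpos : 0 < Real.sqrt Δ) (hΔχp : Real.sqrt Δ < -χp) :
    (∀ η ∈ Icc (0 : ℝ) (2 * lam / ζ ^ 2), 0 < R η) ∧
    (∫ η in (0 : ℝ)..(2 * lam / ζ ^ 2), 1 / R η) =
      1 / Real.sqrt Δ *
        Real.log (|(χp * χ + 2 * lam * Real.sqrt Δ - Δ) /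
          (χp * χ - 2 * lam * Real.sqrt Δ - Δ)|) := by
  set s := Real.sqrt Δ with hs
  have hΔ0 : 0 < Δ := Real.sqrt_pos.mp hΔpos
  have hs2 : s ^ 2 = Δ := Real.sq_sqrt hΔ0.le
  have hζ2 : (0:ℝ) < ζ ^ 2 := by positivity
  have hχpχ : χp = χ + 2 * lam := by rw [hχ, hχp]; ring
  set b := 2 * lam / ζ ^ 2 with hb
  have hb0 : 0 < b := by positivity
  set rp := (-χ + s) / ζ ^ 2 with hrp
  set rm := (-χ - s) / ζ ^ 2 with hrm
  have hkey : s ^ 2 = χ ^ 2 - ζ ^ 2 * (u ^ 2 - u) := by rw [hs2, hΔ]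
  clear_value s b rp rm
  have hbrm : b < rm := by
    rw [hb, hrm]
    exact (div_lt_div_iff_of_pos_right hζ2).mpr (by linarith)
  have hrmrp : rm < rp := by
    rw [hrm, hrp]
    exact (div_lt_div_iff_of_pos_right hζ2).mpr (by linarith)
  have hfact : ∀ x, R x = ζ ^ 2 / 2 * (rp - x) * (rm - x) := by
    intro x
    rw [hR, hrp, hrm]
    field_simp
    ring_nf
    nlinarith [hkey]
  -- positivity on [0, b]
  have hpos : ∀ η ∈ Icc (0 : ℝ) b, 0 < R η := by
    intro η hη
    rw [hfact]
    have h1 : 0 < rp - η := by have := hη.2; linarith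
    have h2 : 0 < rm - η := by have := hη.2; linarith
    positivity
  refine ⟨hpos, ?_⟩
  -- antiderivative
  set F : ℝ → ℝ := fun x => 1 / s * (Real.log (rp - x) - Real.log (rm - x)) with hF
  have hderiv : ∀ x ∈ Set.uIcc (0:ℝ) b, HasDerivAt F (1 / R x) x := by
    intro x hx
    rw [Set.uIcc_of_le hb0.le] at hx
    have h1 : 0 < rp - x := by have := hx.2; linarith
    have h2 : 0 < rm - x := by have := hx.2; linarith
    have d1 : HasDerivAt (fun y : ℝ => rp - y) (-1) x := by
      simpa using (hasDerivAt_id x).const_sub rp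
    have d2 : HasDerivAt (fun y : ℝ => rm - y) (-1) x := by
      simpa using (hasDerivAt_id x).const_sub rm
    have l1 : HasDerivAt (fun y : ℝ => Real.log (rp - y)) ((rp - x)⁻¹ * (-1)) x :=
      (Real.hasDerivAt_log h1.ne').comp x d1
    have l2 : HasDerivAt (fun y : ℝ => Real.log (rm - y)) ((rm - x)⁻¹ * (-1)) x :=
      (Real.hasDerivAt_log h2.ne').comp x d2
    have := ((l1.sub l2).const_mul (1 / s))
    convert this using 1
    · rfl
    · rfl
    · rfl
    rw [hfact]
    have hrpm : (rp - rm) * ζ ^ 2 = 2 * s := by rw [hrp, hrm]; field_simp; ring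
    field_simp
    linear_combination (-1) * hrpm
  have hint : IntervalIntegrable (fun η => 1 / R η) MeasureTheory.volume 0 b := by
    apply ContinuousOn.intervalIntegrable
    apply ContinuousOn.div continuousOn_const
    · have : Continuous R := by
        have : R = fun η => (u ^ 2 - u) / 2 + χ * η + ζ ^ 2 / 2 * η ^ 2 := funext hR
        rw [this]
        exact (continuous_const.add (continuous_const.mul continuous_id)).add
          (continuous_const.mul (continuous_pow 2))
      exact this.continuousOn
    · intro x hx
      rw [Set.uIcc_of_le hb0.le] at hx
      exact (hpos x hx).ne'
  have hFT := intervalIntegral.integral_eq_sub_of_hasDerivAt hderiv hint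
  rw [hFT]
  -- now compute F b - F 0
  have hA : χp * χ + 2 * lam * s - Δ = (rp - b) * rm * ζ ^ 4 := by
    rw [hrp, hrm, hb, hχpχ, ← hs2]; field_simp; ring
  have hB : χp * χ - 2 * lam * s - Δ = (rm - b) * rp * ζ ^ 4 := by
    rw [hrp, hrm, hb, hχpχ, ← hs2]; field_simp; ring
  have hrp0 : 0 < rp := lt_trans (lt_trans hb0 hbrm) hrmrp
  have hrm0 : 0 < rm := lt_trans hb0 hbrm
  have hpb : 0 < rp - b := by linarith
  have hmb : 0 < rm - b := by linarith
  have hApos : 0 < (rp - b) * rm * ζ ^ 4 := by positivity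
  have hBpos : 0 < (rm - b) * rp * ζ ^ 4 := by positivity
  rw [hA, hB, abs_of_pos (div_pos hApos hBpos)]
  rw [Real.log_div hApos.ne' hBpos.ne',
    Real.log_mul (by positivity : ((rp - b) * rm : ℝ) ≠ 0) (by positivity : (ζ ^ 4:ℝ) ≠ 0),
    Real.log_mul (by positivity : ((rm - b) * rp : ℝ) ≠ 0) (by positivity : (ζ ^ 4:ℝ) ≠ 0),
    Real.log_mul hpb.ne' hrm0.ne', Real.log_mul hmb.ne' hrp0.ne']
  simp only [hF, sub_zero]
  ring
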